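/- Let g ∈ P(B) be a function attaining the minimum of Σ_{x∈[n]^d} |f(x) − g(x)| over P(B). Partition [n]^d into D_> = {x : f(x) > g(x)}, D_= = {x : f(x) = g(x)}, D_< = {x : f(x) < g(x)}. Let B_f be the bipartite graph with parts D_> ∪ D_= and D_< ∪ D_=, whose edges are the pairs (x,y) with x ∈ D_> ∪ D_=, y ∈ D_< ∪ D_=, x ≠ y, and g(x) − g(y) = m(x,y). Then B_f contains a matching that matches every vertex of D_> ∪ D_<. -/

import Mathlib

open Finset

/-- Membership of a point in the hypergrid `[n]^d = {1,…,n}^d`. -/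
def inGrid (n d : ℕ) (x : Fin d → ℕ) : Prop := ∀ r : Fin d, 1 ≤ x r ∧ x r ≤ n

/-- The quasimetric associated to a bounding family `(l, u)`. -/
def qm (d : ℕ) (l u : Fin d → ℕ → ℝ) (x y : Fin d → ℕ) : ℝ :=
  ∑ r : Fin d, ((∑ t ∈ Finset.Ico (y r) (x r), u r t) - ∑ t ∈ Finset.Ico (x r) (y r), l r t)

/-- `g` belongs to the bounded-derivative property `P(B)` for `(l,u)`. -/
def memP (n d : ℕ) (l u : Fin d → ℕ → ℝ) (g : (Fin d → ℕ) → ℝ) : Prop :=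
  ∀ r : Fin d, ∀ x : Fin d → ℕ, inGrid n d x → x r + 1 ≤ n →
    l r (x r) ≤ g (Function.update x r (x r + 1)) - g x ∧
    g (Function.update x r (x r + 1)) - g x ≤ u r (x r)


noncomputable section Aux

/-- one-dimensional quasimetric -/
def m1 (l u : ℕ → ℝ) (a b : ℕ) : ℝ :=
  (∑ t ∈ Finset.Ico b a, u t) - ∑ t ∈ Finset.Ico a b, l t

lemma qm_eq (d : ℕ) (l u : Fin d → ℕ → ℝ) (x y : Fin d → ℕ) :
    qm d l u x y = ∑ r : Fin d, m1 (l r) (u r) (x r) (y r) := rfl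

lemma m1_self (l u : ℕ → ℝ) (a : ℕ) : m1 l u a a = 0 := by
  simp [m1]

lemma m1_tri (n : ℕ) (l u : ℕ → ℝ) (hlu : ∀ t, 1 ≤ t → t + 1 ≤ n → l t ≤ u t)
    (a b c : ℕ) (ha1 : 1 ≤ a) (han : a ≤ n) (hb1 : 1 ≤ b) (hbn : b ≤ n)
    (hc1 : 1 ≤ c) (hcn : c ≤ n) :
    m1 l u a c ≤ m1 l u a b + m1 l u b c := by
  have key : ∀ s t : ℕ, 1 ≤ s → t ≤ n →
      ∑ i ∈ Finset.Ico s t, l i ≤ ∑ i ∈ Finset.Ico s t, u i := by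
    intro s t hs ht
    refine Finset.sum_le_sum ?_
    intro i hi
    rw [Finset.mem_Ico] at hi
    exact hlu i (le_trans hs hi.1) (le_trans hi.2 ht)
  unfold m1
  rcases le_total a b with hab | hba
  · rcases le_total b c with hbc | hcb
    · -- a ≤ b ≤ c
      rw [Finset.Ico_eq_empty (not_lt.mpr hab), Finset.Ico_eq_empty (not_lt.mpr hbc),
        Finset.Ico_eq_empty (not_lt.mpr (le_trans hab hbc)),
        ← Finset.sum_Ico_consecutive l hab hbc]
      simp
    · rcases le_total a c with hac | hca
      · -- a ≤ c ≤ b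
        rw [Finset.Ico_eq_empty (not_lt.mpr hab), Finset.Ico_eq_empty (not_lt.mpr hac),
          Finset.Ico_eq_empty (not_lt.mpr hcb),
          ← Finset.sum_Ico_consecutive l hac hcb]
        have := key c b hc1 hbn
        simp only [Finset.sum_empty]
        linarith
      · -- c ≤ a ≤ b
        rw [Finset.Ico_eq_empty (not_lt.mpr hab), Finset.Ico_eq_empty (not_lt.mpr hca),
          Finset.Ico_eq_empty (not_lt.mpr (le_trans hca hab)),
          ← Finset.sum_Ico_consecutive u hca hab]
        have := key a b ha1 hbn
        simp only [Finset.sum_empty]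
        linarith
  · rcases le_total b c with hbc | hcb
    · rcases le_total a c with hac | hca
      · -- b ≤ a ≤ c
        rw [Finset.Ico_eq_empty (not_lt.mpr hac), Finset.Ico_eq_empty (not_lt.mpr hbc),
          Finset.Ico_eq_empty (not_lt.mpr hba),
          ← Finset.sum_Ico_consecutive l hba hac]
        have := key b a hb1 han
        simp only [Finset.sum_empty]
        linarith
      · -- b ≤ c ≤ a
        rw [Finset.Ico_eq_empty (not_lt.mpr hca), Finset.Ico_eq_empty (not_lt.mpr hbc),
          Finset.Ico_eq_empty (not_lt.mpr hba),
          ← Finset.sum_Ico_consecutive u hbc hca]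
        have := key b c hb1 hcn
        simp only [Finset.sum_empty]
        linarith
    · -- c ≤ b ≤ a
      rw [Finset.Ico_eq_empty (not_lt.mpr hba), Finset.Ico_eq_empty (not_lt.mpr hcb),
        Finset.Ico_eq_empty (not_lt.mpr (le_trans hcb hba)),
        ← Finset.sum_Ico_consecutive u hcb hba]
      simp only [Finset.sum_empty]
      linarith

lemma qm_self (d : ℕ) (l u : Fin d → ℕ → ℝ) (x : Fin d → ℕ) : qm d l u x x = 0 := by
  simp [qm]

lemma qm_triangle (n d : ℕ) (l u : Fin d → ℕ → ℝ)
    (hlu : ∀ r : Fin d, ∀ t, 1 ≤ t → t + 1 ≤ n → l r t ≤ u r t)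
    (x y z : Fin d → ℕ) (hx : inGrid n d x) (hy : inGrid n d y) (hz : inGrid n d z) :
    qm d l u x z ≤ qm d l u x y + qm d l u y z := by
  rw [qm_eq, qm_eq, qm_eq, ← Finset.sum_add_distrib]
  refine Finset.sum_le_sum ?_
  intro r _
  exact m1_tri n (l r) (u r) (hlu r) (x r) (y r) (z r)
    (hx r).1 (hx r).2 (hy r).1 (hy r).2 (hz r).1 (hz r).2

lemma qm_update_snd (d : ℕ) (l u : Fin d → ℕ → ℝ) (x y : Fin d → ℕ) (r : Fin d) (c : ℕ) :
    qm d l u x (Function.update y r c)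
      = qm d l u x y - m1 (l r) (u r) (x r) (y r) + m1 (l r) (u r) (x r) c := by
  rw [qm_eq, qm_eq]
  rw [← Finset.sum_erase_add (Finset.univ) _ (Finset.mem_univ r),
      ← Finset.sum_erase_add (Finset.univ) (fun r' => m1 (l r') (u r') (x r') (y r')) (Finset.mem_univ r)]
  have h1 : ∀ r' ∈ Finset.univ.erase r,
      m1 (l r') (u r') (x r') (Function.update y r c r') = m1 (l r') (u r') (x r') (y r') := by
    intro r' hr'
    rw [Function.update_of_ne (Finset.mem_erase.mp hr').1]
  rw [Finset.sum_congr rfl h1, Function.update_self]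
  ring

lemma qm_succ_left (d : ℕ) (l u : Fin d → ℕ → ℝ) (x : Fin d → ℕ) (r : Fin d) :
    qm d l u (Function.update x r (x r + 1)) x = u r (x r) := by
  rw [qm_eq]
  rw [Finset.sum_eq_single_of_mem r (Finset.mem_univ r)]
  · rw [Function.update_self]
    unfold m1
    rw [Finset.Ico_eq_empty (a := x r + 1) (b := x r) (by omega),
      Finset.Ico_add_one_right_eq_Icc, Finset.Icc_self]
    simp
  · intro r' _ hr'
    rw [Function.update_of_ne hr', m1_self]

lemma qm_succ_right (d : ℕ) (l u : Fin d → ℕ → ℝ) (x : Fin d → ℕ) (r : Fin d) :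
    qm d l u x (Function.update x r (x r + 1)) = -(l r (x r)) := by
  rw [qm_eq]
  rw [Finset.sum_eq_single_of_mem r (Finset.mem_univ r)]
  · rw [Function.update_self]
    unfold m1
    rw [Finset.Ico_eq_empty (a := x r + 1) (b := x r) (by omega),
      Finset.Ico_add_one_right_eq_Icc, Finset.Icc_self]
    simp
  · intro r' _ hr'
    rw [Function.update_of_ne hr', m1_self]

lemma diff_le_qm (n d : ℕ) (l u : Fin d → ℕ → ℝ) (g : (Fin d → ℕ) → ℝ)
    (hg : memP n d l u g) (x y : Fin d → ℕ) (hx : inGrid n d x) (hy : inGrid n d y) :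
    g x - g y ≤ qm d l u x y := by
  suffices H : ∀ k : ℕ, ∀ x y : Fin d → ℕ, inGrid n d x → inGrid n d y →
      (∑ r : Fin d, ((x r - y r) + (y r - x r))) = k → g x - g y ≤ qm d l u x y by
    exact H _ x y hx hy rfl
  intro k
  induction k using Nat.strong_induction_on with
  | _ k IH =>
    intro x y hx hy hk
    by_cases hxy : x = y
    · subst hxy
      rw [qm_self]
      simp
    · have hr : ∃ r, x r ≠ y r := by
        by_contra h
        push_neg at h
        exact hxy (funext h)
      obtain ⟨r, hrne⟩ := hr
      have hmeas : ∀ z : Fin d → ℕ,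
          (∑ r' : Fin d, ((x r' - z r') + (z r' - x r')))
            = (∑ r' ∈ Finset.univ.erase r, ((x r' - z r') + (z r' - x r')))
              + ((x r - z r) + (z r - x r)) :=
        fun z => (Finset.sum_erase_add _ _ (Finset.mem_univ r)).symm
      rcases Nat.lt_or_ge (y r) (x r) with hlt | hge
      · -- y r < x r : move y up by one in coordinate r
        set y' := Function.update y r (y r + 1) with hy'def
        have hy'g : inGrid n d y' := by
          intro r'
          rcases eq_or_ne r' r with rfl | hne
          · simp only [hy'def, Function.update_self]
            have h1 := (hx r').2
            exact ⟨by omega, by omega⟩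
          · rw [hy'def, Function.update_of_ne hne]
            exact hy r'
        have hstep : g y' - g y ≤ u r (y r) :=
          (hg r y hy (by have := (hx r).2; omega)).2
        have hm1 : m1 (l r) (u r) (x r) (y r)
            = m1 (l r) (u r) (x r) (y r + 1) + u r (y r) := by
          unfold m1
          rw [Finset.Ico_eq_empty (a := x r) (b := y r) (by omega),
            Finset.Ico_eq_empty (a := x r) (b := y r + 1) (by omega),
            Finset.sum_eq_sum_Ico_succ_bot hlt]
          simp
          ring
        have hqm : qm d l u x y = qm d l u x y' + u r (y r) := by
          rw [hy'def, qm_update_snd, hm1]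
          ring
        have herase : ∀ r' ∈ Finset.univ.erase r,
            ((x r' - y' r') + (y' r' - x r')) = ((x r' - y r') + (y r' - x r')) := by
          intro r' hr'
          rw [hy'def, Function.update_of_ne (Finset.mem_erase.mp hr').1]
        have hk' : (∑ r' : Fin d, ((x r' - y' r') + (y' r' - x r'))) + 1 = k := by
          rw [hmeas y', Finset.sum_congr rfl herase]
          rw [hmeas y] at hk
          have : y' r = y r + 1 := by rw [hy'def, Function.update_self]
          omega
        have hIH := IH _ (by omega) x y' hx hy'g rfl
        linarith
      · -- x r < y r : move y down by one in coordinate r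
        have hlt : x r < y r := by omega
        set c := y r - 1 with hcdef
        have hc1 : 1 ≤ c := by have := (hx r).1; omega
        have hcy : c + 1 = y r := by have := (hx r).1; omega
        set y' := Function.update y r c with hy'def
        have hy'g : inGrid n d y' := by
          intro r'
          rcases eq_or_ne r' r with rfl | hne
          · simp only [hy'def, Function.update_self]
            exact ⟨hc1, by have := (hy r').2; omega⟩
          · rw [hy'def, Function.update_of_ne hne]
            exact hy r'
        have hy'r : y' r = c := by rw [hy'def, Function.update_self]
        have hupd : Function.update y' r (y' r + 1) = y := by
          rw [hy'r, hy'def, Function.update_idem, hcy, Function.update_eq_self]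
        have hstep : l r c ≤ g y - g y' := by
          have := (hg r y' hy'g (by rw [hy'r]; rw [hcy]; exact (hy r).2)).1
          rw [hupd, hy'r] at this
          exact this
        have hm1 : m1 (l r) (u r) (x r) (y r) = m1 (l r) (u r) (x r) c - l r c := by
          unfold m1
          rw [Finset.Ico_eq_empty (a := y r) (b := x r) (by omega),
            Finset.Ico_eq_empty (a := c) (b := x r) (by omega),
            ← hcy, Finset.sum_Ico_succ_top (by omega : x r ≤ c)]
          simp
          ring
        have hqm : qm d l u x y = qm d l u x y' - l r c := by
          rw [hy'def, qm_update_snd, hm1]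
          ring
        have herase : ∀ r' ∈ Finset.univ.erase r,
            ((x r' - y' r') + (y' r' - x r')) = ((x r' - y r') + (y r' - x r')) := by
          intro r' hr'
          rw [hy'def, Function.update_of_ne (Finset.mem_erase.mp hr').1]
        have hk' : (∑ r' : Fin d, ((x r' - y' r') + (y' r' - x r'))) + 1 = k := by
          rw [hmeas y', Finset.sum_congr rfl herase]
          rw [hmeas y] at hk
          omega
        have hIH := IH _ (by omega) x y' hx hy'g rfl
        linarith

def Grid (n d : ℕ) : Finset (Fin d → ℕ) := Finset.Icc (fun _ => (1:ℕ)) (fun _ => n)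

lemma mem_grid {n d : ℕ} {x : Fin d → ℕ} : x ∈ Grid n d ↔ inGrid n d x := by
  simp only [Grid, Finset.mem_Icc, Pi.le_def, inGrid, forall_and]

lemma inGrid_update {n d : ℕ} {x : Fin d → ℕ} (r : Fin d) (hx : inGrid n d x)
    (h : x r + 1 ≤ n) : inGrid n d (Function.update x r (x r + 1)) := by
  intro r'
  rcases eq_or_ne r' r with rfl | hne
  · rw [Function.update_self]
    exact ⟨by omega, h⟩
  · rw [Function.update_of_ne hne]
    exact hx r'

lemma hall_side (n d : ℕ) (l u : Fin d → ℕ → ℝ)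
    (hlu : ∀ r : Fin d, ∀ t : ℕ, 1 ≤ t → t + 1 ≤ n → l r t < u r t)
    (f g : (Fin d → ℕ) → ℝ) (hg : memP n d l u g)
    (hmin : ∀ g' : (Fin d → ℕ) → ℝ, memP n d l u g' →
      ∑ x ∈ Finset.Icc (fun _ => (1:ℕ)) (fun _ => n), |f x - g x|
        ≤ ∑ x ∈ Finset.Icc (fun _ => (1:ℕ)) (fun _ => n), |f x - g' x|)
    (S : Finset (Fin d → ℕ)) (hS : ∀ s ∈ S, s ∈ Grid n d ∧ g s < f s) :
    S.card ≤ (S.biUnion (fun x => (Grid n d).filter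
      (fun y => f y ≤ g y ∧ x ≠ y ∧ g x - g y = qm d l u x y))).card := by
  classical
  have hluw : ∀ r : Fin d, ∀ t : ℕ, 1 ≤ t → t + 1 ≤ n → l r t ≤ u r t :=
    fun r t h1 h2 => le_of_lt (hlu r t h1 h2)
  set D := Grid n d with hD
  set U := D.filter (fun z => ∃ s ∈ S, g s - g z = qm d l u s z) with hU
  have hSU : S ⊆ U := by
    intro s hs
    exact Finset.mem_filter.mpr ⟨(hS s hs).1, ⟨s, hs, by rw [qm_self]; ring⟩⟩
  set V := U.filter (fun z => g z < f z) with hV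
  set W := U.filter (fun z => ¬ g z < f z) with hW
  have hVW : V.card + W.card = U.card := Finset.card_filter_add_card_filter_not _
  have hVU : V ⊆ U := Finset.filter_subset _ _
  have hWU : W ⊆ U := Finset.filter_subset _ _
  have hUD : U ⊆ D := Finset.filter_subset _ _
  have hSV : S ⊆ V := fun s hs => Finset.mem_filter.mpr ⟨hSU hs, (hS s hs).2⟩
  have hWsub : W ⊆ S.biUnion (fun x => D.filter
      (fun y => f y ≤ g y ∧ x ≠ y ∧ g x - g y = qm d l u x y)) := by
    intro z hz
    obtain ⟨hzU, hzf⟩ := Finset.mem_filter.mp hz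
    obtain ⟨hzD, s, hsS, hts⟩ := Finset.mem_filter.mp hzU
    refine Finset.mem_biUnion.mpr ⟨s, hsS, Finset.mem_filter.mpr ⟨hzD, not_lt.mp hzf, ?_, hts⟩⟩
    intro hsz
    rw [hsz] at hsS
    exact hzf ((hS z hsS).2)
  -- slack at the boundary of U
  have claim2 : ∀ (x : Fin d → ℕ) (r : Fin d), x ∈ D → x ∉ U → x r + 1 ≤ n →
      Function.update x r (x r + 1) ∈ U →
      g (Function.update x r (x r + 1)) - g x < u r (x r) := by
    intro x r hxD hxU hxr hx'U
    set x' := Function.update x r (x r + 1) with hx'def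
    have hxG : inGrid n d x := mem_grid.mp hxD
    have hx'G : inGrid n d x' := inGrid_update r hxG hxr
    obtain ⟨_, s, hsS, hts⟩ := Finset.mem_filter.mp hx'U
    have hsG : inGrid n d s := mem_grid.mp (hS s hsS).1
    have h1 : g s - g x ≤ qm d l u s x := diff_le_qm n d l u g hg s x hsG hxG
    have h2 : qm d l u s x ≤ qm d l u s x' + qm d l u x' x :=
      qm_triangle n d l u hluw s x' x hsG hx'G hxG
    have h3 : qm d l u x' x = u r (x r) := qm_succ_left d l u x r
    have h4 : g x' - g x ≤ u r (x r) := (hg r x hxG hxr).2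
    by_contra hcon
    push_neg at hcon
    have heq : g x' - g x = u r (x r) := le_antisymm h4 hcon
    have htight : g s - g x = qm d l u s x := le_antisymm h1 (by linarith)
    exact hxU (Finset.mem_filter.mpr ⟨hxD, s, hsS, htight⟩)
  have claim3 : ∀ (x : Fin d → ℕ) (r : Fin d), x ∈ D → x ∈ U → x r + 1 ≤ n →
      Function.update x r (x r + 1) ∉ U →
      l r (x r) < g (Function.update x r (x r + 1)) - g x := by
    intro x r hxD hxU hxr hx'U
    set x' := Function.update x r (x r + 1) with hx'def
    have hxG : inGrid n d x := mem_grid.mp hxD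
    have hx'G : inGrid n d x' := inGrid_update r hxG hxr
    have hx'D : x' ∈ D := mem_grid.mpr hx'G
    obtain ⟨_, s, hsS, hts⟩ := Finset.mem_filter.mp hxU
    have hsG : inGrid n d s := mem_grid.mp (hS s hsS).1
    have h1 : g s - g x' ≤ qm d l u s x' := diff_le_qm n d l u g hg s x' hsG hx'G
    have h2 : qm d l u s x' ≤ qm d l u s x + qm d l u x x' :=
      qm_triangle n d l u hluw s x x' hsG hxG hx'G
    have h3 : qm d l u x x' = -(l r (x r)) := qm_succ_right d l u x r
    have h4 : l r (x r) ≤ g x' - g x := (hg r x hxG hxr).1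
    by_contra hcon
    push_neg at hcon
    have heq : g x' - g x = l r (x r) := le_antisymm hcon h4
    have htight : g s - g x' = qm d l u s x' := le_antisymm h1 (by linarith)
    exact hx'U (Finset.mem_filter.mpr ⟨hx'D, s, hsS, htight⟩)
  -- the perturbation size ε
  set P2c : Finset ((Fin d → ℕ) × Fin d) := (D ×ˢ (Finset.univ : Finset (Fin d))).filter
      (fun p => p.1 p.2 + 1 ≤ n ∧ p.1 ∉ U ∧ Function.update p.1 p.2 (p.1 p.2 + 1) ∈ U)
    with hP2c
  set P3c : Finset ((Fin d → ℕ) × Fin d) := (D ×ˢ (Finset.univ : Finset (Fin d))).filter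
      (fun p => p.1 p.2 + 1 ≤ n ∧ p.1 ∈ U ∧ Function.update p.1 p.2 (p.1 p.2 + 1) ∉ U)
    with hP3c
  set E1 := V.image (fun z => f z - g z) with hE1
  set E2 := P2c.image
      (fun p => u p.2 (p.1 p.2) - (g (Function.update p.1 p.2 (p.1 p.2 + 1)) - g p.1))
    with hE2
  set E3 := P3c.image
      (fun p => (g (Function.update p.1 p.2 (p.1 p.2 + 1)) - g p.1) - l p.2 (p.1 p.2))
    with hE3
  set Eall := insert (1:ℝ) (E1 ∪ E2 ∪ E3) with hEall
  have hEne : Eall.Nonempty := Finset.insert_nonempty _ _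
  set ε := Eall.min' hEne with hε
  have hεle : ∀ a ∈ Eall, ε ≤ a := fun a ha => Finset.min'_le _ a ha
  have hallpos : ∀ a ∈ Eall, 0 < a := by
    intro a ha
    rcases Finset.mem_insert.mp ha with rfl | ha'
    · norm_num
    rcases Finset.mem_union.mp ha' with ha'' | h3
    · rcases Finset.mem_union.mp ha'' with h1 | h2
      · obtain ⟨z, hz, rfl⟩ := Finset.mem_image.mp h1
        have := (Finset.mem_filter.mp hz).2
        linarith
      · obtain ⟨p, hp, rfl⟩ := Finset.mem_image.mp h2
        obtain ⟨hpD, hc1, hc2, hc3⟩ := Finset.mem_filter.mp hp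
        have := claim2 p.1 p.2 (Finset.mem_product.mp hpD).1 hc2 hc1 hc3
        linarith
    · obtain ⟨p, hp, rfl⟩ := Finset.mem_image.mp h3
      obtain ⟨hpD, hc1, hc2, hc3⟩ := Finset.mem_filter.mp hp
      have := claim3 p.1 p.2 (Finset.mem_product.mp hpD).1 hc2 hc1 hc3
      linarith
  have hεpos : 0 < ε := hallpos ε (Finset.min'_mem _ _)
  -- the perturbed function
  set G2 : (Fin d → ℕ) → ℝ := fun z => if z ∈ U then g z + ε else g z with hG2def
  have hG2 : memP n d l u G2 := by
    intro r x hx hxr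
    set x' := Function.update x r (x r + 1) with hx'def
    have hxD : x ∈ D := mem_grid.mpr hx
    have hx'D : x' ∈ D := mem_grid.mpr (inGrid_update r hx hxr)
    have base := hg r x hx hxr
    by_cases h1 : x ∈ U <;> by_cases h2 : x' ∈ U
    · simp only [hG2def, if_pos h1, if_pos h2]
      constructor <;> linarith [base.1, base.2]
    · -- inside, stepping out
      have hmem : ((x, r) : (Fin d → ℕ) × Fin d) ∈ P3c :=
        Finset.mem_filter.mpr ⟨Finset.mem_product.mpr ⟨hxD, Finset.mem_univ r⟩, hxr, h1, h2⟩
      have hle : ε ≤ (g x' - g x) - l r (x r) :=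
        hεle _ (Finset.mem_insert.mpr (Or.inr (Finset.mem_union.mpr (Or.inr
          (Finset.mem_image.mpr ⟨(x, r), hmem, rfl⟩)))))
      simp only [hG2def, if_pos h1, if_neg h2]
      constructor <;> linarith [base.1, base.2]
    · -- outside, stepping in
      have hmem : ((x, r) : (Fin d → ℕ) × Fin d) ∈ P2c :=
        Finset.mem_filter.mpr ⟨Finset.mem_product.mpr ⟨hxD, Finset.mem_univ r⟩, hxr, h1, h2⟩
      have hle : ε ≤ u r (x r) - (g x' - g x) :=
        hεle _ (Finset.mem_insert.mpr (Or.inr (Finset.mem_union.mpr (Or.inl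
          (Finset.mem_union.mpr (Or.inr (Finset.mem_image.mpr ⟨(x, r), hmem, rfl⟩)))))))
      simp only [hG2def, if_neg h1, if_pos h2]
      constructor <;> linarith [base.1, base.2]
    · simp only [hG2def, if_neg h1, if_neg h2]
      exact base
  have hsum := hmin G2 hG2
  rw [show Finset.Icc (fun _ => (1:ℕ)) (fun _ => n) = D from rfl] at hsum
  -- pointwise comparison
  have hpoint : ∀ z ∈ D, |f z - G2 z|
      ≤ |f z - g z| + ((if z ∈ W then ε else 0) - (if z ∈ V then ε else 0)) := by
    intro z _
    by_cases hzU : z ∈ U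
    · by_cases hzf : g z < f z
      · have hzV : z ∈ V := Finset.mem_filter.mpr ⟨hzU, hzf⟩
        have hzW : z ∉ W := fun hc => (Finset.mem_filter.mp hc).2 hzf
        have hεz : ε ≤ f z - g z :=
          hεle _ (Finset.mem_insert.mpr (Or.inr (Finset.mem_union.mpr (Or.inl
            (Finset.mem_union.mpr (Or.inl (Finset.mem_image.mpr ⟨z, hzV, rfl⟩)))))))
        simp only [hG2def, if_pos hzU, if_pos hzV, if_neg hzW]
        rw [abs_of_pos (by linarith : (0:ℝ) < f z - g z),
          show f z - (g z + ε) = (f z - g z) - ε by ring,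
          abs_of_nonneg (by linarith : (0:ℝ) ≤ f z - g z - ε)]
        ring_nf
        linarith
      · have hzW : z ∈ W := Finset.mem_filter.mpr ⟨hzU, hzf⟩
        have hzV : z ∉ V := fun hc => hzf (Finset.mem_filter.mp hc).2
        simp only [hG2def, if_pos hzU, if_pos hzW, if_neg hzV]
        have h5 : |f z - (g z + ε)| ≤ |f z - g z| + |(-ε)| := by
          rw [show f z - (g z + ε) = (f z - g z) + (-ε) by ring]
          exact abs_add_le _ _
        rw [abs_neg, abs_of_pos hεpos] at h5
        linarith
    · have hzV : z ∉ V := fun hc => hzU (hVU hc)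
      have hzW : z ∉ W := fun hc => hzU (hWU hc)
      simp only [hG2def, if_neg hzU, if_neg hzV, if_neg hzW]
      simp
  have hsum2 : ∑ z ∈ D, |f z - G2 z|
      ≤ ∑ z ∈ D, |f z - g z| + (ε * W.card - ε * V.card) := by
    calc ∑ z ∈ D, |f z - G2 z|
        ≤ ∑ z ∈ D, (|f z - g z| + ((if z ∈ W then ε else 0) - (if z ∈ V then ε else 0))) :=
          Finset.sum_le_sum hpoint
      _ = ∑ z ∈ D, |f z - g z| + (ε * W.card - ε * V.card) := by
          rw [Finset.sum_add_distrib, Finset.sum_sub_distrib]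
          congr 2
          · rw [Finset.sum_ite_mem, Finset.inter_eq_right.mpr (hWU.trans hUD),
              Finset.sum_const, nsmul_eq_mul, mul_comm]
          · rw [Finset.sum_ite_mem, Finset.inter_eq_right.mpr (hVU.trans hUD),
              Finset.sum_const, nsmul_eq_mul, mul_comm]
  have hcards : (V.card : ℝ) ≤ (W.card : ℝ) := by
    have h6 : (0:ℝ) ≤ ε * W.card - ε * V.card := by linarith
    have h7 : ε * (V.card : ℝ) ≤ ε * (W.card : ℝ) := by linarith
    exact le_of_mul_le_mul_left h7 hεpos
  have hc2 : V.card ≤ W.card := Nat.cast_le.mp hcards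
  calc S.card ≤ V.card := Finset.card_le_card hSV
    _ ≤ W.card := hc2
    _ ≤ _ := Finset.card_le_card hWsub

lemma mendelsohn_dulmage {α : Type*} [DecidableEq α] (E : α → α → Prop) (A B : Finset α)
    (φ ψ : α → α)
    (hφE : ∀ a ∈ A, E a (φ a)) (hφinj : Set.InjOn φ A)
    (hψE : ∀ b ∈ B, E (ψ b) b) (hψinj : Set.InjOn ψ B) :
    ∃ M : Finset (α × α), (∀ p ∈ M, E p.1 p.2) ∧
      (∀ p ∈ M, ∀ q ∈ M, p ≠ q → p.1 ≠ q.1 ∧ p.2 ≠ q.2) ∧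
      (∀ x ∈ A ∪ B, ∃ p ∈ M, p.1 = x ∨ p.2 = x) := by
  classical
  set T : α → α := φ ∘ ψ with hT
  set bad : α → Prop := fun b => ∃ (k : ℕ) (b₀ : α), b₀ ∈ B ∧ b₀ ∉ A.image φ ∧
      (∀ i < k, T^[i] b₀ ∈ B ∧ ψ (T^[i] b₀) ∈ A) ∧ T^[k] b₀ = b with hbad
  set GB := B.filter bad with hGB
  set GA := A.filter (fun a => ¬ ∃ b ∈ B, ψ b = a ∧ bad b) with hGA
  set M := GB.image (fun b => (ψ b, b)) ∪ GA.image (fun a => (a, φ a)) with hM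
  have fact1 : ∀ a ∈ A, ∀ b ∈ B, ψ b = a → bad b → bad (φ a) := by
    intro a ha b hb hψb hbadb
    obtain ⟨k, b₀, h1, h2, h3, h4⟩ := hbadb
    refine ⟨k + 1, b₀, h1, h2, ?_, ?_⟩
    · intro i hi
      rcases Nat.lt_or_ge i k with hik | hik
      · exact h3 i hik
      · have : i = k := by omega
        subst this
        rw [h4]
        exact ⟨hb, hψb ▸ ha⟩
    · rw [Function.iterate_succ_apply', h4]
      show φ (ψ b) = φ a
      rw [hψb]
  have fact2 : ∀ a ∈ A, bad (φ a) → ∃ b' ∈ B, ψ b' = a ∧ bad b' := by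
    intro a ha hbadb
    obtain ⟨k, b₀, h1, h2, h3, h4⟩ := hbadb
    rcases k with _ | k
    · exfalso
      rw [Function.iterate_zero_apply] at h4
      subst h4
      exact h2 (Finset.mem_image.mpr ⟨a, ha, rfl⟩)
    · set b' := T^[k] b₀ with hb'
      obtain ⟨hb'B, hb'A⟩ := h3 k (by omega)
      rw [Function.iterate_succ_apply'] at h4
      have hψb' : ψ b' = a := hφinj hb'A ha h4
      exact ⟨b', hb'B, hψb', ⟨k, b₀, h1, h2, fun i hi => h3 i (by omega), rfl⟩⟩
  refine ⟨M, ?_, ?_, ?_⟩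
  · intro p hp
    rcases Finset.mem_union.mp hp with h | h
    · obtain ⟨b, hb, rfl⟩ := Finset.mem_image.mp h
      exact hψE b (Finset.mem_filter.mp hb).1
    · obtain ⟨a, ha, rfl⟩ := Finset.mem_image.mp h
      exact hφE a (Finset.mem_filter.mp ha).1
  · intro p hp q hq hpq
    rcases Finset.mem_union.mp hp with h | h <;> rcases Finset.mem_union.mp hq with h' | h'
    · obtain ⟨b, hb, rfl⟩ := Finset.mem_image.mp h
      obtain ⟨b', hb', rfl⟩ := Finset.mem_image.mp h'
      have hbB := (Finset.mem_filter.mp hb).1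
      have hb'B := (Finset.mem_filter.mp hb').1
      constructor
      · intro hc
        exact hpq (by rw [hψinj hbB hb'B hc])
      · intro hc
        exact hpq (by simp only at hc; rw [hc])
    · obtain ⟨b, hb, rfl⟩ := Finset.mem_image.mp h
      obtain ⟨a, ha, rfl⟩ := Finset.mem_image.mp h'
      obtain ⟨hbB, hbbad⟩ := Finset.mem_filter.mp hb
      obtain ⟨haA, hagood⟩ := Finset.mem_filter.mp ha
      constructor
      · intro hc
        exact hagood ⟨b, hbB, hc, hbbad⟩
      · intro hc
        simp only at hc
        obtain ⟨b', hb'B, hψb', hbadb'⟩ := fact2 a haA (hc ▸ hbbad)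
        exact hagood ⟨b', hb'B, hψb', hbadb'⟩
    · obtain ⟨a, ha, rfl⟩ := Finset.mem_image.mp h
      obtain ⟨b, hb, rfl⟩ := Finset.mem_image.mp h'
      obtain ⟨hbB, hbbad⟩ := Finset.mem_filter.mp hb
      obtain ⟨haA, hagood⟩ := Finset.mem_filter.mp ha
      constructor
      · intro hc
        exact hagood ⟨b, hbB, hc.symm, hbbad⟩
      · intro hc
        simp only at hc
        obtain ⟨b', hb'B, hψb', hbadb'⟩ := fact2 a haA (hc ▸ hbbad)
        exact hagood ⟨b', hb'B, hψb', hbadb'⟩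
    · obtain ⟨a, ha, rfl⟩ := Finset.mem_image.mp h
      obtain ⟨a', ha', rfl⟩ := Finset.mem_image.mp h'
      have haA := (Finset.mem_filter.mp ha).1
      have ha'A := (Finset.mem_filter.mp ha').1
      constructor
      · intro hc
        exact hpq (by simp only at hc; rw [hc])
      · intro hc
        simp only at hc
        exact hpq (by rw [hφinj haA ha'A hc])
  · intro x hx
    rcases Finset.mem_union.mp hx with hxA | hxB
    · by_cases hx' : x ∈ GA
      · exact ⟨(x, φ x), Finset.mem_union.mpr (Or.inr (Finset.mem_image.mpr ⟨x, hx', rfl⟩)),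
          Or.inl rfl⟩
      · have : ∃ b ∈ B, ψ b = x ∧ bad b := by
          by_contra hc
          exact hx' (Finset.mem_filter.mpr ⟨hxA, hc⟩)
        obtain ⟨b, hbB, hψb, hbadb⟩ := this
        refine ⟨(ψ b, b), Finset.mem_union.mpr (Or.inl (Finset.mem_image.mpr
          ⟨b, Finset.mem_filter.mpr ⟨hbB, hbadb⟩, rfl⟩)), Or.inl hψb⟩
    · by_cases hx' : bad x
      · exact ⟨(ψ x, x), Finset.mem_union.mpr (Or.inl (Finset.mem_image.mpr
          ⟨x, Finset.mem_filter.mpr ⟨hxB, hx'⟩, rfl⟩)), Or.inr rfl⟩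
      · have hximg : x ∈ A.image φ := by
          by_contra hc
          exact hx' ⟨0, x, hxB, hc, fun i hi => absurd hi (by omega), rfl⟩
        obtain ⟨a, haA, hφa⟩ := Finset.mem_image.mp hximg
        have haGA : a ∈ GA := by
          refine Finset.mem_filter.mpr ⟨haA, ?_⟩
          intro ⟨b', hb'B, hψb', hbadb'⟩
          exact hx' (hφa ▸ fact1 a haA b' hb'B hψb' hbadb')
        exact ⟨(a, φ a), Finset.mem_union.mpr (Or.inr (Finset.mem_image.mpr ⟨a, haGA, rfl⟩)),
          Or.inr hφa⟩

lemma qm_neg (d : ℕ) (l u : Fin d → ℕ → ℝ) (x y : Fin d → ℕ) :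
    qm d (fun r t => -(u r t)) (fun r t => -(l r t)) x y = qm d l u y x := by
  unfold qm
  apply Finset.sum_congr rfl
  intro r _
  rw [Finset.sum_neg_distrib, Finset.sum_neg_distrib]
  ring

theorem stmt10' (n d : ℕ) (hn : 2 ≤ n) (hd : 1 ≤ d)
    (l u : Fin d → ℕ → ℝ)
    (hlu : ∀ r : Fin d, ∀ t : ℕ, 1 ≤ t → t + 1 ≤ n → l r t < u r t)
    (f g : (Fin d → ℕ) → ℝ)
    (hg : memP n d l u g)
    (hmin : ∀ g' : (Fin d → ℕ) → ℝ, memP n d l u g' →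
      ∑ x ∈ Finset.Icc (fun _ => (1:ℕ)) (fun _ => n), |f x - g x|
        ≤ ∑ x ∈ Finset.Icc (fun _ => (1:ℕ)) (fun _ => n), |f x - g' x|) :
    ∃ M : Finset ((Fin d → ℕ) × (Fin d → ℕ)),
      (∀ p ∈ M, inGrid n d p.1 ∧ inGrid n d p.2 ∧
        g p.1 ≤ f p.1 ∧ f p.2 ≤ g p.2 ∧ p.1 ≠ p.2 ∧
        g p.1 - g p.2 = qm d l u p.1 p.2) ∧
      (∀ p ∈ M, ∀ p' ∈ M, p ≠ p' → p.1 ≠ p'.1 ∧ p.2 ≠ p'.2) ∧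
      (∀ x : Fin d → ℕ, inGrid n d x → f x ≠ g x →
        ∃ p ∈ M, p.1 = x ∨ p.2 = x) := by
  classical
  set D := Grid n d with hD
  set Dgt := D.filter (fun z => g z < f z) with hDgt
  set Dlt := D.filter (fun z => f z < g z) with hDlt
  set nbrOut : (Fin d → ℕ) → Finset (Fin d → ℕ) := fun x => D.filter
      (fun y => f y ≤ g y ∧ x ≠ y ∧ g x - g y = qm d l u x y) with hnbrOut
  set nbrIn : (Fin d → ℕ) → Finset (Fin d → ℕ) := fun y => D.filter
      (fun x => g x ≤ f x ∧ y ≠ x ∧ g x - g y = qm d l u x y) with hnbrIn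
  -- Hall condition on the `D_>` side
  have hallA : ∀ s : Finset {x // x ∈ Dgt},
      s.card ≤ (s.biUnion (fun x => nbrOut x.1)).card := by
    intro s
    have h1 : (s.image Subtype.val).card = s.card :=
      Finset.card_image_of_injective s Subtype.val_injective
    have h2 : s.biUnion (fun x => nbrOut x.1) = (s.image Subtype.val).biUnion nbrOut := by
      rw [Finset.image_biUnion]
    rw [h2, ← h1]
    apply hall_side n d l u hlu f g hg hmin
    intro z hz
    obtain ⟨x, _, rfl⟩ := Finset.mem_image.mp hz
    have := Finset.mem_filter.mp x.property
    exact ⟨this.1, this.2⟩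
  obtain ⟨F, hFinj, hFmem⟩ :=
    (Finset.all_card_le_biUnion_card_iff_exists_injective (fun x : {x // x ∈ Dgt} => nbrOut x.1)).mp hallA
  set φ : (Fin d → ℕ) → (Fin d → ℕ) := fun a => if h : a ∈ Dgt then F ⟨a, h⟩ else a with hφ
  have hφmem : ∀ a ∈ Dgt, φ a ∈ nbrOut a := by
    intro a ha
    simp only [hφ, dif_pos ha]
    exact hFmem ⟨a, ha⟩
  have hφinj : Set.InjOn φ ↑Dgt := by
    intro a ha b hb hab
    simp only [Finset.coe_mem, Set.mem_setOf_eq, Finset.mem_coe] at ha hb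
    simp only [hφ, dif_pos ha, dif_pos hb] at hab
    exact congrArg Subtype.val (hFinj hab)
  -- Hall condition on the `D_<` side, via negation
  have hallB : ∀ s : Finset {x // x ∈ Dlt},
      s.card ≤ (s.biUnion (fun x => nbrIn x.1)).card := by
    intro s
    have h1 : (s.image Subtype.val).card = s.card :=
      Finset.card_image_of_injective s Subtype.val_injective
    have h2 : s.biUnion (fun x => nbrIn x.1) = (s.image Subtype.val).biUnion nbrIn := by
      rw [Finset.image_biUnion]
    rw [h2, ← h1]
    have hlu' : ∀ r : Fin d, ∀ t : ℕ, 1 ≤ t → t + 1 ≤ n → -(u r t) < -(l r t) := by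
      intro r t h1 h2
      have := hlu r t h1 h2
      linarith
    have hg' : memP n d (fun r t => -(u r t)) (fun r t => -(l r t)) (fun z => -(g z)) := by
      intro r x h1 h2
      have := hg r x h1 h2
      dsimp only
      constructor <;> linarith [this.1, this.2]
    have hmin' : ∀ h : (Fin d → ℕ) → ℝ,
        memP n d (fun r t => -(u r t)) (fun r t => -(l r t)) h →
        ∑ x ∈ Finset.Icc (fun _ => (1:ℕ)) (fun _ => n), |(fun z => -(f z)) x - (fun z => -(g z)) x|
          ≤ ∑ x ∈ Finset.Icc (fun _ => (1:ℕ)) (fun _ => n), |(fun z => -(f z)) x - h x| := by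
      intro h hh
      have hh2 : memP n d l u (fun z => -(h z)) := by
        intro r x h1 h2
        have := hh r x h1 h2
        dsimp only at this ⊢
        constructor <;> linarith [this.1, this.2]
      have hm := hmin _ hh2
      calc ∑ x ∈ Finset.Icc (fun _ => (1:ℕ)) (fun _ => n), |(fun z => -(f z)) x - (fun z => -(g z)) x|
          = ∑ x ∈ Finset.Icc (fun _ => (1:ℕ)) (fun _ => n), |f x - g x| := by
            apply Finset.sum_congr rfl
            intro x _
            rw [show (fun z => -(f z)) x - (fun z => -(g z)) x = -(f x - g x) by dsimp; ring, abs_neg]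
        _ ≤ ∑ x ∈ Finset.Icc (fun _ => (1:ℕ)) (fun _ => n), |f x - (fun z => -(h z)) x| := hm
        _ = ∑ x ∈ Finset.Icc (fun _ => (1:ℕ)) (fun _ => n), |(fun z => -(f z)) x - h x| := by
            apply Finset.sum_congr rfl
            intro x _
            rw [show f x - (fun z => -(h z)) x = -((fun z => -(f z)) x - h x) by dsimp; ring, abs_neg]
    have key := hall_side n d (fun r t => -(u r t)) (fun r t => -(l r t)) hlu'
      (fun z => -(f z)) (fun z => -(g z)) hg' hmin' (s.image Subtype.val) ?_
    · have hset : ∀ y : Fin d → ℕ, (Grid n d).filter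
          (fun z => (fun z => -(f z)) z ≤ (fun z => -(g z)) z ∧ y ≠ z ∧
            (fun z => -(g z)) y - (fun z => -(g z)) z
              = qm d (fun r t => -(u r t)) (fun r t => -(l r t)) y z) = nbrIn y := by
        intro y
        apply Finset.filter_congr
        intro z _
        rw [qm_neg]
        dsimp only
        constructor
        · rintro ⟨hh1, hh2, hh3⟩
          exact ⟨by linarith, hh2, by linarith⟩
        · rintro ⟨hh1, hh2, hh3⟩
          exact ⟨by linarith, hh2, by linarith⟩
      calc (s.image Subtype.val).card
          ≤ ((s.image Subtype.val).biUnion (fun x => (Grid n d).filter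
            (fun z => (fun z => -(f z)) z ≤ (fun z => -(g z)) z ∧ x ≠ z ∧
              (fun z => -(g z)) x - (fun z => -(g z)) z
                = qm d (fun r t => -(u r t)) (fun r t => -(l r t)) x z))).card := key
        _ = ((s.image Subtype.val).biUnion nbrIn).card := by
            congr 1
            apply Finset.biUnion_congr rfl
            intro y _
            exact hset y
    · intro z hz
      obtain ⟨x, _, rfl⟩ := Finset.mem_image.mp hz
      have := Finset.mem_filter.mp x.property
      refine ⟨this.1, ?_⟩
      linarith [this.2]
  obtain ⟨Ψ, hΨinj, hΨmem⟩ :=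
    (Finset.all_card_le_biUnion_card_iff_exists_injective (fun x : {x // x ∈ Dlt} => nbrIn x.1)).mp hallB
  set ψ : (Fin d → ℕ) → (Fin d → ℕ) := fun b => if h : b ∈ Dlt then Ψ ⟨b, h⟩ else b with hψ
  have hψmem : ∀ b ∈ Dlt, ψ b ∈ nbrIn b := by
    intro b hb
    simp only [hψ, dif_pos hb]
    exact hΨmem ⟨b, hb⟩
  have hψinj : Set.InjOn ψ ↑Dlt := by
    intro a ha b hb hab
    simp only [Finset.mem_coe] at ha hb
    simp only [hψ, dif_pos ha, dif_pos hb] at hab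
    exact congrArg Subtype.val (hΨinj hab)
  -- combine the two matchings
  set E : (Fin d → ℕ) → (Fin d → ℕ) → Prop := fun x y =>
    inGrid n d x ∧ inGrid n d y ∧ g x ≤ f x ∧ f y ≤ g y ∧ x ≠ y ∧
      g x - g y = qm d l u x y with hE
  have hφE : ∀ a ∈ Dgt, E a (φ a) := by
    intro a ha
    obtain ⟨haD, haf⟩ := Finset.mem_filter.mp ha
    obtain ⟨hbD, h1, h2, h3⟩ := Finset.mem_filter.mp (hφmem a ha)
    exact ⟨mem_grid.mp haD, mem_grid.mp hbD, le_of_lt haf, h1, h2, h3⟩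
  have hψE : ∀ b ∈ Dlt, E (ψ b) b := by
    intro b hb
    obtain ⟨hbD, hbf⟩ := Finset.mem_filter.mp hb
    obtain ⟨haD, h1, h2, h3⟩ := Finset.mem_filter.mp (hψmem b hb)
    exact ⟨mem_grid.mp haD, mem_grid.mp hbD, h1, le_of_lt hbf, Ne.symm h2, h3⟩
  obtain ⟨M, hME, hMmatch, hMcover⟩ :=
    mendelsohn_dulmage E Dgt Dlt φ ψ hφE hφinj hψE hψinj
  refine ⟨M, fun p hp => hME p hp, hMmatch, ?_⟩
  intro x hx hfg
  apply hMcover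
  rcases lt_or_gt_of_ne hfg with h | h
  · exact Finset.mem_union.mpr (Or.inr (Finset.mem_filter.mpr ⟨mem_grid.mpr hx, h⟩))
  · exact Finset.mem_union.mpr (Or.inl (Finset.mem_filter.mpr ⟨mem_grid.mpr hx, h⟩))

/-- if `g ∈ P(B)` attains the minimum `L_1`-distance to `f`, then the
bipartite graph `B_f` (left part `D_> ∪ D_=`, right part `D_< ∪ D_=`, edges the pairs
`(x,y)` with `x ≠ y` and `g(x) − g(y) = m(x,y)`) contains a matching that matches
every vertex of `D_> ∪ D_<`. -/
theorem stmt10 (n d : ℕ) (hn : 2 ≤ n) (hd : 1 ≤ d)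
    (l u : Fin d → ℕ → ℝ)
    (hlu : ∀ r : Fin d, ∀ t : ℕ, 1 ≤ t → t + 1 ≤ n → l r t < u r t)
    (f g : (Fin d → ℕ) → ℝ)
    (hg : memP n d l u g)
    (hmin : ∀ g' : (Fin d → ℕ) → ℝ, memP n d l u g' →
      ∑ x ∈ Finset.Icc (fun _ => (1:ℕ)) (fun _ => n), |f x - g x|
        ≤ ∑ x ∈ Finset.Icc (fun _ => (1:ℕ)) (fun _ => n), |f x - g' x|) :
    ∃ M : Finset ((Fin d → ℕ) × (Fin d → ℕ)),
      -- every pair of `M` is an edge of the bipartite graph `B_f`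
      (∀ p ∈ M, inGrid n d p.1 ∧ inGrid n d p.2 ∧
        g p.1 ≤ f p.1 ∧ f p.2 ≤ g p.2 ∧ p.1 ≠ p.2 ∧
        g p.1 - g p.2 = qm d l u p.1 p.2) ∧
      -- `M` is a matching of the bipartite graph
      (∀ p ∈ M, ∀ p' ∈ M, p ≠ p' → p.1 ≠ p'.1 ∧ p.2 ≠ p'.2) ∧
      -- `M` matches every vertex of `D_> ∪ D_<`
      (∀ x : Fin d → ℕ, inGrid n d x → f x ≠ g x →
        ∃ p ∈ M, p.1 = x ∨ p.2 = x) := by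
  exact stmt10' n d hn hd l u hlu f g hg hmin
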